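/- Let G be a countable group and H ≤ G an infinite subgroup such that the pair (G,H) has the relative property (T), meaning: for every complex Hilbert space 𝓗 and every unitary representation π of G on 𝓗, if for every finite subset F ⊆ G and every ε > 0 there exists a unit vector ξ with ‖π(g)ξ − ξ‖ ≤ ε for all g ∈ F, then there exists a nonzero vector ξ₀ with π(h)ξ₀ = ξ₀ for all h ∈ H. Then the range of the restriction homomorphism Char(G) → Char(H), γ ↦ γ|_H, is finite; equivalently, the subgroup {γ ∈ Char(G) | γ(h) = 1 for all h ∈ H} has finite index in Char(G). -/

import Mathlib

open scoped ENNReal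

section Diag
variable {ι : Type*}

lemma diag_memℓp (c : ι → Circle) (f : lp (fun _ : ι => ℂ) 2) :
    Memℓp (fun i => (c i : ℂ) * f i) 2 := by
  have h2 : (0:ℝ) < (2 : ℝ≥0∞).toReal := by norm_num
  apply (memℓp_gen_iff h2).2
  have := (lp.memℓp f).summable h2
  refine this.congr fun i => ?_
  simp [Circle.norm_coe, map_mul]

noncomputable def diagE (c : ι → Circle) :
    lp (fun _ : ι => ℂ) 2 ≃ₗᵢ[ℂ] lp (fun _ : ι => ℂ) 2 where
  toFun f := ⟨fun i => (c i : ℂ) * f i, diag_memℓp c f⟩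
  invFun f := ⟨fun i => ((c i)⁻¹ : Circle) * f i, diag_memℓp c⁻¹ f⟩
  map_add' f g := by ext i; simp; exact mul_add _ _ _
  map_smul' a f := by ext i; simp; ring
  left_inv f := by ext i; simp [mul_assoc]
  right_inv f := by ext i; simp [mul_assoc]
  norm_map' f := by
    have h2 : (0:ℝ) < (2 : ℝ≥0∞).toReal := by norm_num
    rw [lp.norm_eq_tsum_rpow h2, lp.norm_eq_tsum_rpow h2]
    congr 1
    refine tsum_congr fun i => ?_
    congr 1
    simp [Circle.norm_coe, map_mul]

lemma diagE_apply (c : ι → Circle) (f : lp (fun _ : ι => ℂ) 2) (i : ι) :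
    (diagE c f : ∀ _ : ι, ℂ) i = (c i : ℂ) * f i := rfl
end Diag

lemma key_pair {G : Type*} [Group G] (H : Subgroup G)
    (hS : (Set.range fun γ : G →* Circle => γ.comp H.subtype).Infinite)
    (F : Finset G) {ε : ℝ} (hε : 0 < ε) :
    ∃ γ γ' : G →* Circle, γ.comp H.subtype ≠ γ'.comp H.subtype ∧
      ∀ g ∈ F, ‖(γ g : ℂ) - γ' g‖ ≤ ε := by
  set r := fun γ : G →* Circle => γ.comp H.subtype with hr
  let j : ↥(Set.range r) → (G →* Circle) := fun s => s.2.choose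
  have hj : ∀ s : ↥(Set.range r), r (j s) = s.1 := fun s => s.2.choose_spec
  have hjinj : Function.Injective j := by
    intro s₁ s₂ h
    apply Subtype.ext
    rw [← hj s₁, ← hj s₂, h]
  haveI : Infinite ↥(Set.range r) := hS.to_subtype
  have hA : (Set.range j).Infinite := Set.infinite_range_of_injective hjinj
  have htb : TotallyBounded (Set.univ : Set (↥F → Circle)) := isCompact_univ.totallyBounded
  obtain ⟨t, htf, hcov⟩ := (Metric.totallyBounded_iff).mp htb (ε/2) (half_pos hε)
  set w : (G →* Circle) → (↥F → Circle) := fun γ g => γ g with hw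
  have hball : ∀ γ : G →* Circle, ∃ y ∈ t, w γ ∈ Metric.ball y (ε/2) := by
    intro γ
    have := hcov (Set.mem_univ (w γ))
    simpa using this
  choose b hbt hbb using hball
  obtain ⟨x, hx, y, hy, hxy, hbxy⟩ :=
    hA.exists_ne_map_eq_of_mapsTo (fun γ _ => hbt γ) htf
  refine ⟨x, y, ?_, ?_⟩
  · obtain ⟨s₁, rfl⟩ := hx
    obtain ⟨s₂, rfl⟩ := hy
    have : s₁ ≠ s₂ := fun h => hxy (by rw [h])
    rw [show (j s₁).comp H.subtype = r (j s₁) from rfl,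
      show (j s₂).comp H.subtype = r (j s₂) from rfl, hj s₁, hj s₂]
    exact fun h => this (Subtype.ext h)
  · intro g hg
    have hd : dist (w x) (w y) < ε := by
      calc dist (w x) (w y) ≤ dist (w x) (b x) + dist (b y) (w y) := by
            rw [hbxy]; exact dist_triangle _ _ _
        _ < ε/2 + ε/2 := by
            gcongr
            · exact Metric.mem_ball.mp (hbb x)
            · exact Metric.mem_ball'.mp (hbb y)
        _ = ε := by ring
    have := (dist_le_pi_dist (w x) (w y) ⟨g, hg⟩).trans hd.le
    rw [show dist (w x ⟨g, hg⟩) (w y ⟨g, hg⟩) = dist (w x ⟨g, hg⟩ : ℂ) (w y ⟨g, hg⟩) from rfl,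
      dist_eq_norm] at this
    exact this

/-- If `(G,H)` has the relative property (T) with `H` infinite, then the range of the
restriction homomorphism `Char(G) → Char(H)` is finite. -/
theorem stmt4 {G : Type*} [Group G] [Countable G] (H : Subgroup G) [Infinite H]
    (relT : ∀ (𝓗 : Type) [NormedAddCommGroup 𝓗] [InnerProductSpace ℂ 𝓗] [CompleteSpace 𝓗]
      (π : G →* (𝓗 ≃ₗᵢ[ℂ] 𝓗)),
      (∀ (F : Finset G) (ε : ℝ), 0 < ε → ∃ ξ : 𝓗, ‖ξ‖ = 1 ∧ ∀ g ∈ F, ‖π g ξ - ξ‖ ≤ ε) →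
      ∃ ξ₀ : 𝓗, ξ₀ ≠ 0 ∧ ∀ h ∈ H, π h ξ₀ = ξ₀) :
    (Set.range fun γ : G →* Circle => γ.comp H.subtype).Finite := by
  by_contra hfin
  have hS : (Set.range fun γ : G →* Circle => γ.comp H.subtype).Infinite := hfin
  obtain ⟨e, he⟩ := exists_surjective_nat (Finset G)
  have hkey := fun p : ℕ × ℕ => key_pair H hS (e p.1) (ε := 1/((p.2:ℝ)+1)) (by positivity)
  choose γ γ' hne hclose using hkey
  let c : G → (ℕ × ℕ) → Circle := fun g p => γ p g * (γ' p g)⁻¹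
  let 𝓗 : Type := lp (fun _ : ℕ × ℕ => ℂ) 2
  let π : G →* (𝓗 ≃ₗᵢ[ℂ] 𝓗) :=
    { toFun := fun g => diagE (c g)
      map_one' := by
        refine LinearIsometryEquiv.ext fun f => ?_
        ext i
        simp [diagE_apply, c]
      map_mul' := fun g g' => by
        refine LinearIsometryEquiv.ext fun f => ?_
        ext i
        show ((c (g * g') i : ℂ)) * f i = (c g i : ℂ) * ((c g' i : ℂ) * f i)
        simp only [c, map_mul, mul_inv, Circle.coe_mul, Circle.coe_inv]
        ring }
  have hπ : ∀ (g : G) (f : 𝓗) (i : ℕ × ℕ), (π g f : ∀ _ : ℕ × ℕ, ℂ) i = (c g i : ℂ) * f i :=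
    fun g f i => rfl
  have hai : ∀ (F : Finset G) (ε : ℝ), 0 < ε →
      ∃ ξ : 𝓗, ‖ξ‖ = 1 ∧ ∀ g ∈ F, ‖π g ξ - ξ‖ ≤ ε := by
    intro F ε hε
    obtain ⟨m, hm⟩ := he F
    obtain ⟨n, hn⟩ := exists_nat_one_div_lt hε
    refine ⟨lp.single 2 (m, n) 1, ?_, ?_⟩
    · have := lp.norm_single (p := 2) (E := fun _ : ℕ × ℕ => ℂ) (by norm_num)
        (m, n) ((fun _ => (1:ℂ)) (m, n))
      rw [this]; simp
    · intro g hg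
      have hcoord : π g (lp.single 2 (m, n) 1) - lp.single 2 (m, n) 1
          = lp.single 2 (m, n) ((fun q => (c g q : ℂ) - 1) (m, n)) := by
        ext i
        rw [lp.coeFn_sub, Pi.sub_apply, hπ]
        by_cases hip : i = (m, n)
        · subst hip
          simp [lp.single_apply_self]
        · rw [lp.single_apply_ne 2 (m, n) _ hip, lp.single_apply_ne 2 (m, n) _ hip]
          ring
      rw [hcoord, lp.norm_single (p := 2) (E := fun _ : ℕ × ℕ => ℂ) (by norm_num)
        (m, n) ((fun q => (c g q : ℂ) - 1) (m, n))]
      have hrw : ((c g (m, n) : ℂ) - 1)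
          = ((γ (m, n) g : ℂ) - γ' (m, n) g) * ((γ' (m, n) g : ℂ))⁻¹ := by
        have hnz : ((γ' (m, n) g : ℂ)) ≠ 0 := Circle.coe_ne_zero _
        simp only [c, Circle.coe_mul, Circle.coe_inv, sub_mul, mul_inv_cancel₀ hnz]
      beta_reduce
      rw [hrw, norm_mul, norm_inv]
      have h1 : ‖((γ' (m, n) g : ℂ))‖ = 1 := by
        simp [Circle.norm_coe]
      rw [h1, inv_one, mul_one]
      have hgF : g ∈ e m := by rw [hm]; exact hg
      exact (hclose (m, n) g hgF).trans hn.le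
  obtain ⟨ξ₀, hξ0, hinv⟩ := relT 𝓗 π hai
  apply hξ0
  ext i
  obtain ⟨x, hx⟩ : ∃ x : ↥H, (γ i) (H.subtype x) ≠ (γ' i) (H.subtype x) := by
    by_contra hc
    push_neg at hc
    exact hne i (MonoidHom.ext fun x => hc x)
  have h2 : (c (↑x : G) i : ℂ) * ξ₀ i = ξ₀ i := by
    have h1 := hinv (↑x) x.2
    have := congrArg (fun ξ : 𝓗 => (ξ : ∀ _ : ℕ × ℕ, ℂ) i) h1
    simpa [hπ] using this
  have hcne : (c (↑x : G) i : ℂ) ≠ 1 := by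
    simp only [c, Circle.coe_mul, Circle.coe_inv]
    intro h
    apply hx
    have hnz : ((γ' i (↑x : G) : ℂ)) ≠ 0 := Circle.coe_ne_zero _
    apply Circle.coe_injective
    field_simp at h
    simpa [Subgroup.coe_subtype] using h
  have : ((c (↑x : G) i : ℂ) - 1) * ξ₀ i = 0 := by rw [sub_mul, h2, one_mul, sub_self]
  have hz : (ξ₀ : ∀ _ : ℕ × ℕ, ℂ) i = 0 :=
    (mul_eq_zero.mp this).resolve_left (sub_ne_zero.mpr hcne)
  simpa using hz
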